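/- For a fixed CFG and input of length n, the total number of items in the variant's U array satisfies |U| ≤ |E|, where |U| = Σ_i |U_i| and |E| = Σ_{i,j} |E_{i,j}|. -/

import Mathlib

/-! Formalization of Earley parsing and the Nederhof–Satta variant. -/

variable {T N : Type}

/-- A context-free grammar: a start nonterminal and a set of productions. -/
structure CFG (T N : Type) where
  initial : N
  rules : Set (N × List (Symbol T N))

/-- One rewriting step of the grammar. -/
def CFG.Produces (g : CFG T N) (u v : List (Symbol T N)) : Prop :=
  ∃ A α p q, (A, α) ∈ g.rules ∧ u = p ++ [Symbol.nonterminal A] ++ q ∧ v = p ++ α ++ q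

/-- The derivation relation ⇒* (reflexive-transitive closure of rewriting). -/
def CFG.Derives (g : CFG T N) : List (Symbol T N) → List (Symbol T N) → Prop :=
  Relation.ReflTransGen g.Produces

/-- The language of the grammar: { w | S ⇒* w }. -/
def CFG.language (g : CFG T N) : Set (List T) :=
  { w | g.Derives [Symbol.nonterminal g.initial] (w.map Symbol.terminal) }

/-- `inputSlice w i j` is the substring a_{i+1}⋯a_j of `w` (0-based: w[i..j)), as symbols. -/
def inputSlice (w : List T) (i j : ℕ) : List (Symbol T N) :=
  ((w.take j).drop i).map Symbol.terminal

/-- The least Earley table: `Earley g w A α β i j` means the dotted item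
[A → α • β] is inserted in E_{i,j}. -/
inductive Earley (g : CFG T N) (w : List T) :
    N → List (Symbol T N) → List (Symbol T N) → ℕ → ℕ → Prop where
  | init {α} : (g.initial, α) ∈ g.rules → Earley g w g.initial [] α 0 0
  | predict {B α A β i j γ} : Earley g w B α (Symbol.nonterminal A :: β) i j →
      (A, γ) ∈ g.rules → Earley g w A [] γ j j
  | scan {A α a β i j} : Earley g w A α (Symbol.terminal a :: β) i j →
      w[j]? = some a → Earley g w A (α ++ [Symbol.terminal a]) β i (j + 1)
  | complete {A α B β i k γ j} : Earley g w A α (Symbol.nonterminal B :: β) i k →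
      Earley g w B γ [] k j → (B, γ) ∈ g.rules →
      Earley g w A (α ++ [Symbol.nonterminal B]) β i j

mutual
  /-- Forward part of the variant: `VarU g w β j` means suffix item [β] ∈ U_j. -/
  inductive VarU (g : CFG T N) (w : List T) : List (Symbol T N) → ℕ → Prop where
    | init {α} : (g.initial, α) ∈ g.rules → VarU g w α 0
    | predict {A β j γ} : VarU g w (Symbol.nonterminal A :: β) j →
        (A, γ) ∈ g.rules → VarU g w γ j
    | scan {a β j} : VarU g w (Symbol.terminal a :: β) j → w[j]? = some a →
        VarU g w β (j + 1)
    | complete {B β k γ j} : VarU g w (Symbol.nonterminal B :: β) k → (B, γ) ∈ g.rules →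
        VarT g w γ k j → VarU g w β j

  /-- Backward part of the variant: `VarT g w β j m` means suffix item [β] ∈ T_{j,m}. -/
  inductive VarT (g : CFG T N) (w : List T) : List (Symbol T N) → ℕ → ℕ → Prop where
    | empty {m} : VarU g w [] m → VarT g w [] m m
    | scan {a β j m} : VarU g w (Symbol.terminal a :: β) j → w[j]? = some a →
        VarT g w β (j + 1) m → VarT g w (Symbol.terminal a :: β) j m
    | complete {B β k γ j m} : VarU g w (Symbol.nonterminal B :: β) k → (B, γ) ∈ g.rules →
        VarT g w γ k j → VarT g w β j m → VarT g w (Symbol.nonterminal B :: β) k m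
end



theorem keyT {g : CFG T N} {w : List T} {β : List (Symbol T N)} {k m : ℕ}
    (h : VarT g w β k m) : ∀ A α i, Earley g w A α β i k →
    Earley g w A (α ++ β) [] i m := by
  refine VarT.rec (motive_1 := fun _ _ _ => True)
    (motive_2 := fun β k m _ => ∀ A α i, Earley g w A α β i k →
      Earley g w A (α ++ β) [] i m)
    (fun _ => trivial) (fun _ _ _ => trivial) (fun _ _ _ => trivial)
    (fun _ _ _ _ _ => trivial) ?_ ?_ ?_ h
  · intro m' _ _ A α i he; simpa using he
  · intro a β' j' m' _ ha _ _ iht A α i he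
    have := iht _ _ _ (Earley.scan he ha)
    simpa using this
  · intro B β' k' γ j' m' _ hr _ _ _ ihg ihb A α i he
    have hbg := ihg _ _ _ (Earley.predict he hr)
    have h2 := Earley.complete he (by simpa using hbg) hr
    have := ihb _ _ _ h2
    simpa using this

theorem keyU {g : CFG T N} {w : List T} {β : List (Symbol T N)} {j : ℕ}
    (h : VarU g w β j) : ∃ A α i, Earley g w A α β i j := by
  refine VarU.rec (motive_1 := fun β j _ => ∃ A α i, Earley g w A α β i j)
    (motive_2 := fun β k m _ => ∀ A α i, Earley g w A α β i k →
      Earley g w A (α ++ β) [] i m)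
    ?_ ?_ ?_ ?_ ?_ ?_ ?_ h
  · intro α hr; exact ⟨g.initial, [], 0, Earley.init hr⟩
  · intro A' β' j' γ _ hr ih
    obtain ⟨A, α, i, he⟩ := ih
    exact ⟨_, [], _, Earley.predict he hr⟩
  · intro a β' j' _ ha ih
    obtain ⟨A, α, i, he⟩ := ih
    exact ⟨A, _, i, Earley.scan he ha⟩
  · intro B β' k' γ j' _ hr _ ih iht
    obtain ⟨A, α, i, he⟩ := ih
    have hbg := iht _ _ _ (Earley.predict he hr)
    exact ⟨A, _, i, Earley.complete he (by simpa using hbg) hr⟩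
  · intro m' _ _ A α i he; simpa using he
  · intro a β' j' m' _ ha _ _ iht A α i he
    have := iht _ _ _ (Earley.scan he ha)
    simpa using this
  · intro B β' k' γ j' m' _ hr _ _ _ ihg ihb A α i he
    have hbg := ihg _ _ _ (Earley.predict he hr)
    have h2 := Earley.complete he (by simpa using hbg) hr
    have := ihb _ _ _ h2
    simpa using this

theorem earley_bound {g : CFG T N} {w : List T} {A α β i j}
    (h : Earley g w A α β i j) :
    (A, α ++ β) ∈ g.rules ∧ i ≤ w.length ∧ j ≤ w.length := by
  induction h with
  | init hr => exact ⟨hr, by simp, by simp⟩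
  | predict h1 hr ih => exact ⟨hr, ih.2.2, ih.2.2⟩
  | scan h1 ha ih =>
      have hj := Nat.succ_le_of_lt (List.getElem?_eq_some_iff.mp ha).1
      exact ⟨by simpa using ih.1, ih.2.1, hj⟩
  | complete h1 h2 hr ih1 ih2 =>
      exact ⟨by simpa using ih1.1, ih1.2.1, ih2.2.2⟩

/-- |U| ≤ |E|, counting all items over all entries. -/
theorem variant_U_size_le_earley (g : CFG T N) (w : List T)
    (hfin : g.rules.Finite) :
    Set.ncard {p : List (Symbol T N) × ℕ | VarU g w p.1 p.2} ≤
      Set.ncard {q : N × List (Symbol T N) × List (Symbol T N) × ℕ × ℕ |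
        Earley g w q.1 q.2.1 q.2.2.1 q.2.2.2.1 q.2.2.2.2} := by
  classical
  set n := w.length with hn
  -- Finiteness of the Earley set
  have hEfin : {q : N × List (Symbol T N) × List (Symbol T N) × ℕ × ℕ |
      Earley g w q.1 q.2.1 q.2.2.1 q.2.2.2.1 q.2.2.2.2}.Finite := by
    apply Set.Finite.subset (s := ⋃ r ∈ g.rules,
      (fun x : ℕ × ℕ × ℕ => (r.1, r.2.take x.1, r.2.drop x.1, x.2.1, x.2.2)) ''
        (Set.Iic r.2.length ×ˢ Set.Iic n ×ˢ Set.Iic n))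
    · exact hfin.biUnion fun r _ =>
        (((Set.finite_Iic _).prod ((Set.finite_Iic _).prod (Set.finite_Iic _))).image _)
    · rintro ⟨A, α, β, i, j⟩ hq
      obtain ⟨hr, hi, hj⟩ := earley_bound hq
      refine Set.mem_biUnion hr ⟨(α.length, i, j), ⟨by simp, hi, hj⟩, ?_⟩
      simp [List.take_left, List.drop_left]
  -- the injection
  refine Set.ncard_le_ncard_of_injOn
    (fun p => if h : VarU g w p.1 p.2 then
        ((keyU h).choose, (keyU h).choose_spec.choose, p.1,
          (keyU h).choose_spec.choose_spec.choose, p.2)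
      else (g.initial, [], p.1, 0, p.2)) ?_ ?_ hEfin
  · rintro ⟨β, j⟩ hp
    simp only [Set.mem_setOf_eq] at hp ⊢
    rw [dif_pos hp]
    exact (keyU hp).choose_spec.choose_spec.choose_spec
  · rintro ⟨β₁, j₁⟩ h₁ ⟨β₂, j₂⟩ h₂ heq
    simp only [Set.mem_setOf_eq] at h₁ h₂
    simp only at heq
    rw [dif_pos h₁, dif_pos h₂] at heq
    have e1 := congrArg (fun q => q.2.2.1) heq
    have e2 := congrArg (fun q => q.2.2.2.2) heq
    simp at e1 e2
    exact Prod.ext e1 e2
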